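/- Let {C_0, ..., C_d} be a d-critical family in R^d. Define a cage as a closed set containing base points a_i ∈ ∩_{h≠i} C_h for each i = 0,...,d. Then there exist d+1 points (namely the unique nearest points p_0,...,p_d from ∩_{h≠j}C_h to C_j) that belong to every convex cage carried by the family. -/

import Mathlib

open Metric Set Module
open scoped RealInnerProductSpace

/-- If moving from `a` slightly in direction `b` does not decrease the norm,
then `⟪a, b⟫ ≥ 0`. -/
lemma inner_nonneg_of_min {E : Type*} [NormedAddCommGroup E] [InnerProductSpace ℝ E]
    {a b : E} (h : ∀ t : ℝ, 0 < t → t ≤ 1 → ‖a‖ ≤ ‖a + t • b‖) : 0 ≤ ⟪a, b⟫ := by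
  by_contra hneg
  push_neg at hneg
  have hb : b ≠ 0 := by
    rintro rfl
    simp at hneg
  have hb2 : 0 < ‖b‖ ^ 2 := pow_pos (norm_pos_iff.mpr hb) 2
  have hKpos : 0 < -⟪a, b⟫ := by linarith
  set t : ℝ := min 1 (-⟪a, b⟫ / ‖b‖ ^ 2) with htdef
  have ht0 : 0 < t := lt_min one_pos (div_pos hKpos hb2)
  have ht1 : t ≤ 1 := min_le_left _ _
  have htb : t * ‖b‖ ^ 2 ≤ -⟪a, b⟫ := by
    have h' := min_le_right 1 (-⟪a, b⟫ / ‖b‖ ^ 2)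
    calc t * ‖b‖ ^ 2 ≤ (-⟪a, b⟫ / ‖b‖ ^ 2) * ‖b‖ ^ 2 :=
          mul_le_mul_of_nonneg_right h' hb2.le
      _ = -⟪a, b⟫ := div_mul_cancel₀ _ (ne_of_gt hb2)
  have h1 := h t ht0 ht1
  have h2 : ‖a + t • b‖ ^ 2 = ‖a‖ ^ 2 + 2 * (t * ⟪a, b⟫) + t ^ 2 * ‖b‖ ^ 2 := by
    rw [norm_add_sq_real, real_inner_smul_right, norm_smul, Real.norm_eq_abs, mul_pow, sq_abs]
  have h3 : ‖a‖ ^ 2 ≤ ‖a + t • b‖ ^ 2 := by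
    have h4 := norm_nonneg a
    nlinarith [h1]
  nlinarith [h3, h2, mul_le_mul_of_nonneg_left htb ht0.le, mul_pos ht0 hKpos]

/-- There are d+1 points (the unique nearest points) belonging to every convex
cage carried by a d-critical family. -/
theorem points_in_every_convex_cage (d : ℕ)
    (C : Fin (d + 1) → Set (EuclideanSpace ℝ (Fin d)))
    (hcomp : ∀ i, IsCompact (C i)) (hconv : ∀ i, Convex ℝ (C i))
    (hcrit : ∀ j, (⋂ i ∈ {i : Fin (d + 1) | i ≠ j}, C i).Nonempty)
    (hempty : (⋂ i, C i) = ∅) :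
    ∃ p : Fin (d + 1) → EuclideanSpace ℝ (Fin d),
      (∀ j, p j ∈ (⋂ i ∈ {i : Fin (d + 1) | i ≠ j}, C i) ∧
        ∀ q ∈ (⋂ i ∈ {i : Fin (d + 1) | i ≠ j}, C i),
          Metric.infDist (p j) (C j) ≤ Metric.infDist q (C j)) ∧
      ∀ M : Set (EuclideanSpace ℝ (Fin d)), IsClosed M → Convex ℝ M →
        (∀ i, ∃ a ∈ M, a ∈ ⋂ h ∈ {h : Fin (d + 1) | h ≠ i}, C h) →
        ∀ j, p j ∈ M := by
  classical
  rcases Nat.eq_zero_or_pos d with hd | hd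
  · -- degenerate case `d = 0`: the space is a single point
    subst hd
    have hsub : ∀ x y : EuclideanSpace ℝ (Fin 0), x = y := fun x y =>
      PiLp.ext fun i => i.elim0
    refine ⟨fun _ => 0, fun j => ⟨?_, ?_⟩, ?_⟩
    · refine Set.mem_iInter₂.2 fun i hi => absurd (by omega : i = j) hi
    · intro q _
      exact le_of_eq (congrArg (fun z => infDist z (C j)) (hsub _ q))
    · intro M _ _ hbase j
      obtain ⟨b, hbM, -⟩ := hbase j
      have hb : (fun _ => (0 : EuclideanSpace ℝ (Fin 0))) j = b := hsub _ b
      rw [hb]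
      exact hbM
  · -- main case `d ≥ 1`
    haveI : Nontrivial (Fin (d + 1)) :=
      ⟨⟨⟨0, by omega⟩, ⟨1, by omega⟩, by simp [Fin.ext_iff]⟩⟩
    have hKex : ∀ j : Fin (d + 1), ∃ p ∈ (⋂ i ∈ {i : Fin (d + 1) | i ≠ j}, C i),
        ∀ q ∈ (⋂ i ∈ {i : Fin (d + 1) | i ≠ j}, C i),
          infDist p (C j) ≤ infDist q (C j) := by
      intro j
      obtain ⟨i0, hi0⟩ := exists_ne j
      have hclosed : IsClosed (⋂ i ∈ {i : Fin (d + 1) | i ≠ j}, C i) :=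
        isClosed_biInter fun i _ => (hcomp i).isClosed
      have hsubset : (⋂ i ∈ {i : Fin (d + 1) | i ≠ j}, C i) ⊆ C i0 := fun x hx =>
        Set.mem_iInter₂.mp hx i0 hi0
      have hKcompact : IsCompact (⋂ i ∈ {i : Fin (d + 1) | i ≠ j}, C i) :=
        (hcomp i0).of_isClosed_subset hclosed hsubset
      obtain ⟨p, hpmem, hpmin⟩ :=
        hKcompact.exists_isMinOn (hcrit j) (continuous_infDist_pt (C j)).continuousOn
      exact ⟨p, hpmem, fun q hq => hpmin hq⟩
    choose p hp hmin using hKex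
    refine ⟨p, fun j => ⟨hp j, hmin j⟩, ?_⟩
    intro M hMclosed hMconv hbase j
    choose a haM haK using hbase
    set P := p j with hPdef
    suffices hgoal : P ∈ convexHull ℝ (Set.range a) by
      exact convexHull_min (Set.range_subset_iff.2 haM) hMconv hgoal
    have hPC : ∀ h, h ≠ j → P ∈ C h := fun h hh => Set.mem_iInter₂.mp (hp j) h hh
    have haC : ∀ i h, h ≠ i → a i ∈ C h := fun i h hhi => Set.mem_iInter₂.mp (haK i) h hhi
    obtain ⟨i0, hi0⟩ := exists_ne j
    have hCjne : (C j).Nonempty := by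
      obtain ⟨z, hz⟩ := hcrit i0
      exact ⟨z, Set.mem_iInter₂.mp hz j (Ne.symm hi0)⟩
    obtain ⟨c, hcC, hcd⟩ := (hcomp j).exists_infDist_eq_dist hCjne P
    have hPnot : P ∉ C j := by
      intro hPj
      have hall : P ∈ ⋂ i, C i := Set.mem_iInter.2 fun i => by
        rcases eq_or_ne i j with rfl | hij
        · exact hPj
        · exact hPC i hij
      rw [hempty] at hall
      exact hall
    have hr : 0 < dist P c := dist_pos.2 fun h => hPnot (h ▸ hcC)
    set r : ℝ := dist P c with hrdef
    set u : EuclideanSpace ℝ (Fin d) := c - P with hu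
    have hrnorm : ‖u‖ = r := by rw [hu, ← dist_eq_norm, dist_comm]
    have huu : ⟪u, u⟫ = r ^ 2 := by rw [real_inner_self_eq_norm_sq, hrnorm]
    have hmin_c : ∀ y ∈ C j, dist P c ≤ dist P y := by
      intro y hy
      rw [← hrdef, ← hcd]
      exact infDist_le_dist_of_mem hy
    -- every point of C j is strictly on the far side of the hyperplane through P normal to u
    have hCside : ∀ y ∈ C j, r ^ 2 ≤ ⟪y - P, u⟫ := by
      intro y hy
      have h0 : 0 ≤ ⟪P - c, c - y⟫ := by
        apply inner_nonneg_of_min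
        intro t ht0 ht1
        have hz : (1 - t) • c + t • y ∈ C j := hconv j hcC hy (by linarith) ht0.le (by ring)
        have heq : (P - c) + t • (c - y) = P - ((1 - t) • c + t • y) := by module
        calc ‖P - c‖ = dist P c := (dist_eq_norm P c).symm
          _ ≤ dist P ((1 - t) • c + t • y) := hmin_c _ hz
          _ = ‖P - ((1 - t) • c + t • y)‖ := dist_eq_norm _ _
          _ = ‖(P - c) + t • (c - y)‖ := by rw [heq]
      have h1 : ⟪y - c, u⟫ = ⟪P - c, c - y⟫ := by
        rw [hu, show (c : EuclideanSpace ℝ (Fin d)) - P = -(P - c) from by abel,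
          show (y : EuclideanSpace ℝ (Fin d)) - c = -(c - y) from by abel,
          inner_neg_neg, real_inner_comm]
      have hsplit : ⟪y - P, u⟫ = ⟪y - c, u⟫ + ⟪c - P, u⟫ := by
        rw [← inner_add_left]
        congr 1
        abel
      have h2 : ⟪c - P, u⟫ = r ^ 2 := by rw [← hu, huu]
      linarith
    -- every point of the critical intersection is on the near side
    have hKside : ∀ x : EuclideanSpace ℝ (Fin d),
        (∀ h, h ≠ j → x ∈ C h) → ⟪x - P, u⟫ ≤ 0 := by
      intro x hx
      have h0 : 0 ≤ ⟪P - c, x - P⟫ := by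
        apply inner_nonneg_of_min
        intro t ht0 ht1
        have hzK : (1 - t) • P + t • x ∈ ⋂ i ∈ {i : Fin (d + 1) | i ≠ j}, C i := by
          refine Set.mem_iInter₂.2 fun i hi =>
            hconv i (hPC i hi) (hx i hi) (by linarith) ht0.le (by ring)
        have heq : (P - c) + t • (x - P) = ((1 - t) • P + t • x) - c := by module
        calc ‖P - c‖ = dist P c := (dist_eq_norm P c).symm
          _ = infDist P (C j) := hcd.symm
          _ ≤ infDist ((1 - t) • P + t • x) (C j) := hmin j _ hzK
          _ ≤ dist ((1 - t) • P + t • x) c := infDist_le_dist_of_mem hcC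
          _ = ‖((1 - t) • P + t • x) - c‖ := dist_eq_norm _ _
          _ = ‖(P - c) + t • (x - P)‖ := by rw [heq]
      have h1 : ⟪x - P, u⟫ = -⟪P - c, x - P⟫ := by
        rw [hu, show (c : EuclideanSpace ℝ (Fin d)) - P = -(P - c) from by abel,
          inner_neg_right, real_inner_comm]
      linarith
    -- the far halfspace
    set H : Set (EuclideanSpace ℝ (Fin d)) := {y | r ^ 2 ≤ ⟪y - P, u⟫} with hHdef
    have hlin : IsLinearMap ℝ (fun y : EuclideanSpace ℝ (Fin d) => ⟪y, u⟫) :=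
      ⟨fun x y => by rw [inner_add_left], fun s x => by rw [real_inner_smul_left, smul_eq_mul]⟩
    have hHconv : Convex ℝ H := by
      have hcv := convex_halfSpace_ge hlin (r ^ 2 + ⟪P, u⟫)
      have hseteq : H = {w : EuclideanSpace ℝ (Fin d) | r ^ 2 + ⟪P, u⟫ ≤ ⟪w, u⟫} := by
        ext y
        simp only [hHdef, Set.mem_setOf_eq, inner_sub_left]
        constructor <;> intro <;> linarith
      rw [hseteq]
      exact hcv
    have hcH : c ∈ H := by
      show r ^ 2 ≤ ⟪c - P, u⟫
      rw [← hu, huu]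
    -- Radon's theorem on the d+2 points P, a 0, ..., a d
    set f : Fin (d + 2) → EuclideanSpace ℝ (Fin d) := Fin.cons P a with hf
    have hdep : ¬ AffineIndependent ℝ f := by
      intro hind
      have h1 := hind.card_le_finrank_succ
      have h2 : finrank ℝ (vectorSpan ℝ (Set.range f)) ≤
          finrank ℝ (EuclideanSpace ℝ (Fin d)) := Submodule.finrank_le _
      have h3 : finrank ℝ (EuclideanSpace ℝ (Fin d)) = d := finrank_euclideanSpace_fin
      rw [Fintype.card_fin] at h1
      omega
    obtain ⟨I, x, hxI, hxIc⟩ := Convex.radon_partition hdep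
    have key : ∀ S : Set (Fin (d + 2)), (0 : Fin (d + 2)) ∉ S →
        x ∈ convexHull ℝ (f '' S) → x ∈ convexHull ℝ (f '' Sᶜ) →
        P ∈ convexHull ℝ (Set.range a) := by
      intro S h0S hxS hxSc
      -- the Radon point lies in every C h, h ≠ j
      have himg : ∀ (T : Set (Fin (d + 2))) (h : Fin (d + 1)), h ≠ j → Fin.succ h ∉ T →
          convexHull ℝ (f '' T) ⊆ C h := by
        intro T h hhj hT
        apply convexHull_min _ (hconv h)
        rintro _ ⟨idx, hidxT, rfl⟩
        rcases Fin.eq_zero_or_eq_succ idx with rfl | ⟨i, rfl⟩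
        · simpa [hf] using hPC h hhj
        · have hih : i ≠ h := by rintro rfl; exact hT hidxT
          simpa [hf] using haC i h (Ne.symm hih)
      have hxK : ∀ h, h ≠ j → x ∈ C h := by
        intro h hhj
        by_cases hmem : Fin.succ h ∈ S
        · exact himg Sᶜ h hhj (fun hc => hc hmem) hxSc
        · exact himg S h hhj hmem hxS
      have hxle : ⟪x - P, u⟫ ≤ 0 := hKside x hxK
      by_cases hjS : Fin.succ j ∈ S
      · -- the complement side lies in `insert P H`, hence x = P
        have hsub : f '' Sᶜ ⊆ insert P H := by
          rintro _ ⟨idx, hidx, rfl⟩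
          rcases Fin.eq_zero_or_eq_succ idx with rfl | ⟨i, rfl⟩
          · simp [hf]
          · have hij : i ≠ j := by rintro rfl; exact hidx hjS
            refine Set.mem_insert_iff.2 (Or.inr ?_)
            show r ^ 2 ≤ ⟪f (Fin.succ i) - P, u⟫
            simpa [hf] using hCside _ (haC i j (Ne.symm hij))
        have hx' : x ∈ convexHull ℝ (insert P H) := convexHull_mono hsub hxSc
        rw [convexHull_insert ⟨c, hcH⟩, mem_convexJoin] at hx'
        obtain ⟨pp, hpp, z, hz, hseg⟩ := hx'
        rw [Set.mem_singleton_iff] at hpp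
        subst hpp
        rw [hHconv.convexHull_eq] at hz
        obtain ⟨s1, t1, hs1, ht1, hst, hxeq⟩ := hseg
        have hzP : r ^ 2 ≤ ⟪z - P, u⟫ := hz
        have hxP : x - P = t1 • (z - P) := by
          have hs1' : s1 = 1 - t1 := by linarith
          rw [← hxeq, hs1']
          module
        have hinner : ⟪x - P, u⟫ = t1 * ⟪z - P, u⟫ := by
          rw [hxP, real_inner_smul_left]
        have ht1z : t1 = 0 := by
          have hr2 : 0 < r ^ 2 := pow_pos hr 2
          have ht1le : t1 ≤ 0 := by nlinarith
          linarith
        have hxPP : x = P := by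
          have hs1' : s1 = 1 := by linarith
          rw [← hxeq, ht1z, hs1', zero_smul, add_zero, one_smul]
        have hra : f '' S ⊆ Set.range a := by
          rintro _ ⟨idx, hidx, rfl⟩
          rcases Fin.eq_zero_or_eq_succ idx with rfl | ⟨i, rfl⟩
          · exact absurd hidx h0S
          · exact ⟨i, by simp [hf]⟩
        rw [← hxPP]
        exact convexHull_mono hra hxS
      · -- otherwise the S side lies entirely in H: contradiction
        have hsub : f '' S ⊆ H := by
          rintro _ ⟨idx, hidx, rfl⟩
          rcases Fin.eq_zero_or_eq_succ idx with rfl | ⟨i, rfl⟩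
          · exact absurd hidx h0S
          · have hij : i ≠ j := by rintro rfl; exact hjS hidx
            show r ^ 2 ≤ ⟪f (Fin.succ i) - P, u⟫
            simpa [hf] using hCside _ (haC i j (Ne.symm hij))
        have hxH : r ^ 2 ≤ ⟪x - P, u⟫ := convexHull_min hsub hHconv hxS
        exact absurd hxH (not_le.2 (lt_of_le_of_lt hxle (pow_pos hr 2)))
    by_cases h0I : (0 : Fin (d + 2)) ∈ I
    · exact key Iᶜ (fun hc => hc h0I) hxIc (by rwa [compl_compl])
    · exact key I h0I hxI hxIc
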